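/- The function A ↦ (det A)^{1/n} is concave on the convex cone of positive semidefinite Hermitian n×n matrices. -/

import Mathlib

open scoped ComplexOrder
open Matrix Finset

lemma geom_superadd (n : ℕ) (hn : 0 < n) (a b : Fin n → ℝ)
    (ha : ∀ i, 0 ≤ a i) (hb : ∀ i, 0 ≤ b i) :
    (∏ i, a i) ^ ((1:ℝ)/n) + (∏ i, b i) ^ ((1:ℝ)/n) ≤ (∏ i, (a i + b i)) ^ ((1:ℝ)/n) := by
  have hn' : (n : ℝ) ≠ 0 := Nat.cast_ne_zero.mpr hn.ne'
  by_cases hc : ∀ i, 0 < a i + b i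
  · have hP : 0 < ∏ i, (a i + b i) := Finset.prod_pos (fun i _ => hc i)
    have hPr : 0 < (∏ i, (a i + b i)) ^ ((1:ℝ)/n) := Real.rpow_pos_of_pos hP _
    have key : ∀ (z : Fin n → ℝ), (∀ i, 0 ≤ z i) →
        (∏ i, z i) ^ ((1:ℝ)/n) ≤ (∑ i, (1/n : ℝ) * (z i / (a i + b i))) *
          (∏ i, (a i + b i)) ^ ((1:ℝ)/n) := by
      intro z hz
      have hw : ∀ i ∈ (Finset.univ : Finset (Fin n)), (0:ℝ) ≤ 1/n := fun _ _ => by positivity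
      have hw' : ∑ _i : Fin n, (1/n : ℝ) = 1 := by
        rw [Finset.sum_const, Finset.card_univ, Fintype.card_fin, nsmul_eq_mul]
        field_simp
      have hz' : ∀ i ∈ Finset.univ, (0:ℝ) ≤ z i / (a i + b i) :=
        fun i _ => div_nonneg (hz i) (hc i).le
      have h2 := Real.geom_mean_le_arith_mean_weighted Finset.univ
        (fun _ => (1/n : ℝ)) (fun i => z i / (a i + b i)) hw hw' hz'
      have h3 : ∏ i, (z i / (a i + b i)) ^ ((1:ℝ)/n)
          = (∏ i, z i) ^ ((1:ℝ)/n) / (∏ i, (a i + b i)) ^ ((1:ℝ)/n) := by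
        rw [Real.finset_prod_rpow _ _ (fun i _ => div_nonneg (hz i) (hc i).le),
          ← Real.div_rpow (Finset.prod_nonneg fun i _ => hz i) hP.le,
          Finset.prod_div_distrib]
      rw [h3] at h2
      calc (∏ i, z i) ^ ((1:ℝ)/n)
          = ((∏ i, z i) ^ ((1:ℝ)/n) / (∏ i, (a i + b i)) ^ ((1:ℝ)/n)) *
            (∏ i, (a i + b i)) ^ ((1:ℝ)/n) := by field_simp
        _ ≤ _ := by
            apply mul_le_mul_of_nonneg_right h2 hPr.le
    have hsum : (∑ i, (1/n : ℝ) * (a i / (a i + b i)))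
        + (∑ i, (1/n : ℝ) * (b i / (a i + b i))) = 1 := by
      rw [← Finset.sum_add_distrib]
      have : ∀ i ∈ Finset.univ, (1/n : ℝ) * (a i / (a i + b i)) + (1/n : ℝ) * (b i / (a i + b i)) = 1/n := by
        intro i _
        rw [← mul_add, ← add_div, div_self (hc i).ne']
        ring
      rw [Finset.sum_congr rfl this]
      simp
      field_simp
    calc (∏ i, a i) ^ ((1:ℝ)/n) + (∏ i, b i) ^ ((1:ℝ)/n)
        ≤ (∑ i, (1/n : ℝ) * (a i / (a i + b i))) * (∏ i, (a i + b i)) ^ ((1:ℝ)/n)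
          + (∑ i, (1/n : ℝ) * (b i / (a i + b i))) * (∏ i, (a i + b i)) ^ ((1:ℝ)/n) :=
          add_le_add (key a ha) (key b hb)
      _ = _ := by rw [← add_mul, hsum, one_mul]
  · push_neg at hc
    obtain ⟨i, hi⟩ := hc
    have hai : a i = 0 := le_antisymm (by linarith [hb i]) (ha i)
    have hbi : b i = 0 := le_antisymm (by linarith [ha i]) (hb i)
    have h1 : ∏ j, a j = 0 := Finset.prod_eq_zero (Finset.mem_univ i) hai
    have h2 : ∏ j, b j = 0 := Finset.prod_eq_zero (Finset.mem_univ i) hbi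
    have h3 : ∏ j, (a j + b j) = 0 := Finset.prod_eq_zero (Finset.mem_univ i) (by rw [hai, hbi, add_zero])
    rw [h1, h2, h3, Real.zero_rpow (by positivity)]
    simp


lemma psd_det_re {n : ℕ} {A : Matrix (Fin n) (Fin n) ℂ} (hA : A.PosSemidef) :
    A.det = (A.det.re : ℂ) ∧ 0 ≤ A.det.re := by
  have h := hA.1.det_eq_prod_eigenvalues
  have h2 : A.det = ((∏ i, hA.1.eigenvalues i : ℝ) : ℂ) := by
    rw [h]; push_cast; rfl
  have h3 : 0 ≤ ∏ i, hA.1.eigenvalues i :=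
    Finset.prod_nonneg fun i _ => hA.eigenvalues_nonneg i
  have h4 : A.det.re = ∏ i, hA.1.eigenvalues i := by rw [h2, Complex.ofReal_re]
  exact ⟨by rw [h4, ← h2], by rw [h4]; exact h3⟩

lemma psd_smul {n : ℕ} {A : Matrix (Fin n) (Fin n) ℂ} (hA : A.PosSemidef)
    {t : ℝ} (ht : 0 ≤ t) : ((t : ℂ) • A).PosSemidef := by
  constructor
  · have := hA.1
    unfold Matrix.IsHermitian at *
    rw [conjTranspose_smul, this]
    congr 1
    simp [RCLike.star_def, Complex.conj_ofReal]
  · exact (hA.smul (show (0:ℂ) ≤ (t:ℂ) from Complex.zero_le_real.mpr ht)).2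


open scoped MatrixOrder in
lemma minkowski_det {n : ℕ} (hn : 0 < n) {X Y : Matrix (Fin n) (Fin n) ℂ}
    (hX : X.PosSemidef) (hY : Y.PosSemidef) :
    X.det.re ^ ((1:ℝ)/n) + Y.det.re ^ ((1:ℝ)/n) ≤ (X + Y).det.re ^ ((1:ℝ)/n) := by
  have hn' : (n : ℝ) ≠ 0 := Nat.cast_ne_zero.mpr hn.ne'
  have hexp : (1:ℝ)/n ≠ 0 := by positivity
  have hXY : (X + Y).PosSemidef := hX.add hY
  by_cases hdet : (X + Y).det = 0
  · -- degenerate case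
    obtain ⟨v, hv, hv0⟩ := (Matrix.exists_mulVec_eq_zero_iff.mpr hdet)
    have hq : star v ⬝ᵥ X *ᵥ v + star v ⬝ᵥ Y *ᵥ v = 0 := by
      have : star v ⬝ᵥ (X + Y) *ᵥ v = 0 := by rw [hv0, dotProduct_zero]
      rwa [add_mulVec, dotProduct_add] at this
    have hX0 : star v ⬝ᵥ X *ᵥ v = 0 ∧ star v ⬝ᵥ Y *ᵥ v = 0 :=
      (add_eq_zero_iff_of_nonneg (hX.dotProduct_mulVec_nonneg v) (hY.dotProduct_mulVec_nonneg v)).mp hq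
    have hdX : X.det = 0 :=
      Matrix.exists_mulVec_eq_zero_iff.mp
        ⟨v, hv, (hX.dotProduct_mulVec_zero_iff v).mp hX0.1⟩
    have hdY : Y.det = 0 :=
      Matrix.exists_mulVec_eq_zero_iff.mp
        ⟨v, hv, (hY.dotProduct_mulVec_zero_iff v).mp hX0.2⟩
    rw [hdX, hdY, hdet]
    simp only [Complex.zero_re, Real.zero_rpow hexp]
    norm_num
  · -- main case
    set S := CFC.sqrt (X + Y) with hSdef
    have hS : S.PosSemidef := (CFC.sqrt_nonneg _).posSemidef
    have hSS : S * S = X + Y := CFC.sqrt_mul_sqrt_self _ hXY.nonneg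
    have hdS : S.det * S.det = (X + Y).det := by rw [← det_mul, hSS]
    have hdSne : S.det ≠ 0 := fun h => hdet (by rw [← hdS, h, mul_zero])
    have hSu : IsUnit S.det := Ne.isUnit hdSne
    have hSi : S⁻¹ * S = 1 := nonsing_inv_mul S hSu
    have hSi' : S * S⁻¹ = 1 := mul_nonsing_inv S hSu
    have hSiH : (S⁻¹).IsHermitian := hS.1.inv
    set M := S⁻¹ * X * S⁻¹ with hMdef
    set N := S⁻¹ * Y * S⁻¹ with hNdef
    have hM : M.PosSemidef := by
      have := hX.mul_mul_conjTranspose_same S⁻¹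
      rwa [hSiH.eq] at this
    have hN : N.PosSemidef := by
      have := hY.mul_mul_conjTranspose_same S⁻¹
      rwa [hSiH.eq] at this
    have hMN : M + N = 1 := by
      have : M + N = S⁻¹ * (X + Y) * S⁻¹ := by
        rw [hMdef, hNdef, mul_add, add_mul]
      rw [this, ← hSS, show S⁻¹ * (S * S) * S⁻¹ = (S⁻¹ * S) * (S * S⁻¹) by
        noncomm_ring, hSi, hSi', one_mul]
    have hXeq : X = S * M * S := by
      rw [hMdef]
      calc X = (S * S⁻¹) * X * (S⁻¹ * S) := by rw [hSi', hSi]; noncomm_ring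
        _ = S * (S⁻¹ * X * S⁻¹) * S := by noncomm_ring
    have hYeq : Y = S * N * S := by
      rw [hNdef]
      calc Y = (S * S⁻¹) * Y * (S⁻¹ * S) := by rw [hSi', hSi]; noncomm_ring
        _ = S * (S⁻¹ * Y * S⁻¹) * S := by noncomm_ring
    have hdX : X.det = (X + Y).det * M.det := by
      conv_lhs => rw [hXeq]
      rw [det_mul, det_mul, ← hdS]; ring
    have hdY : Y.det = (X + Y).det * N.det := by
      conv_lhs => rw [hYeq]
      rw [det_mul, det_mul, ← hdS]; ring
    -- eigenvalues of M
    set μ := hM.1.eigenvalues with hμdef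
    set U := (hM.1.eigenvectorUnitary : Matrix (Fin n) (Fin n) ℂ) with hUdef
    have hUU : U * star U = 1 := Matrix.mem_unitaryGroup_iff.mp hM.1.eigenvectorUnitary.2
    have hUU' : star U * U = 1 := Matrix.mem_unitaryGroup_iff'.mp hM.1.eigenvectorUnitary.2
    have hspec : M = U * diagonal (RCLike.ofReal ∘ μ) * star U := hM.1.spectral_theorem
    have hdM : M.det = ((∏ i, μ i : ℝ) : ℂ) := by
      rw [hM.1.det_eq_prod_eigenvalues]; push_cast; rfl
    have hμ0 : ∀ i, 0 ≤ μ i := fun i => hM.eigenvalues_nonneg i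
    -- N = 1 - M,  det N = ∏ (1 - μ i)
    have hNM : N = 1 - M := by rw [← hMN]; abel
    have hone : (1 : Matrix (Fin n) (Fin n) ℂ) = U * 1 * star U := by
      rw [mul_one, hUU]
    have hNspec : N = U * (1 - diagonal (RCLike.ofReal ∘ μ)) * star U := by
      rw [hNM, mul_sub, sub_mul, ← hspec, ← hone]
    have hdiag : (1 : Matrix (Fin n) (Fin n) ℂ) - diagonal (RCLike.ofReal ∘ μ)
        = diagonal (fun i => 1 - (μ i : ℂ)) := by
      rw [← diagonal_one, diagonal_sub]
      rfl
    have hdN : N.det = ((∏ i, (1 - μ i) : ℝ) : ℂ) := by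
      rw [hNspec, det_mul_right_comm, hUU, one_mul, hdiag, det_diagonal]
      push_cast; rfl
    have hμ1 : ∀ i, μ i ≤ 1 := by
      intro i
      have hc : (star U * N * U).PosSemidef := by
        have := hN.conjTranspose_mul_mul_same U
        rwa [← Matrix.star_eq_conjTranspose] at this
      have hc2 : star U * N * U = diagonal (fun i => 1 - (μ i : ℂ)) := by
        rw [hNspec, ← hdiag]
        calc star U * (U * (1 - diagonal (RCLike.ofReal ∘ μ)) * star U) * U
            = (star U * U) * (1 - diagonal (RCLike.ofReal ∘ μ)) * (star U * U) := by
              noncomm_ring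
          _ = _ := by rw [hUU']; noncomm_ring
      rw [hc2] at hc
      have := posSemidef_diagonal_iff.mp hc i
      have h2 : (0:ℂ) ≤ ((1 - μ i : ℝ) : ℂ) := by push_cast; convert this using 1
      have := Complex.zero_le_real.mp h2
      linarith
    -- real determinant values
    set r := (X + Y).det.re with hrdef
    have hr : (X + Y).det = (r : ℂ) := (psd_det_re hXY).1
    have hr0 : 0 ≤ r := (psd_det_re hXY).2
    have hdXre : X.det.re = r * ∏ i, μ i := by
      rw [hdX, hr, hdM, ← Complex.ofReal_mul, Complex.ofReal_re]
    have hdYre : Y.det.re = r * ∏ i, (1 - μ i) := by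
      rw [hdY, hr, hdN, ← Complex.ofReal_mul, Complex.ofReal_re]
    have hμprod : 0 ≤ ∏ i, μ i := Finset.prod_nonneg fun i _ => hμ0 i
    have hμprod' : 0 ≤ ∏ i, (1 - μ i) := Finset.prod_nonneg fun i _ => show (0:ℝ) ≤ 1 - μ i by linarith [hμ1 i]
    have hgm := geom_superadd n hn μ (fun i => 1 - μ i) hμ0 (fun i => show (0:ℝ) ≤ 1 - μ i by linarith [hμ1 i])
    have hsum1 : (∏ i, (μ i + (1 - μ i))) = 1 := by simp
    rw [hsum1, Real.one_rpow] at hgm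
    rw [hdXre, hdYre,
      Real.mul_rpow hr0 hμprod, Real.mul_rpow hr0 hμprod', ← mul_add]
    calc r ^ ((1:ℝ)/n) * ((∏ i, μ i) ^ ((1:ℝ)/n) + (∏ i, (1 - μ i)) ^ ((1:ℝ)/n))
        ≤ r ^ ((1:ℝ)/n) * 1 :=
          mul_le_mul_of_nonneg_left hgm (Real.rpow_nonneg hr0 _)
      _ = _ := by rw [mul_one]


theorem stmt_2 (n : ℕ) (A B : Matrix (Fin n) (Fin n) ℂ)
    (hA : A.PosSemidef) (hB : B.PosSemidef) (t : ℝ) (ht0 : 0 ≤ t) (ht1 : t ≤ 1) :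
    t * (A.det.re) ^ ((1 : ℝ) / n) + (1 - t) * (B.det.re) ^ ((1 : ℝ) / n) ≤
      ((((t : ℂ) • A + ((1 : ℂ) - t) • B).det).re) ^ ((1 : ℝ) / n) := by
  rcases Nat.eq_zero_or_pos n with hn | hn
  · subst hn
    norm_num [Real.rpow_zero]
  have hn' : (n : ℝ) ≠ 0 := Nat.cast_ne_zero.mpr hn.ne'
  have hcast : ((1 : ℂ) - (t : ℂ)) = ((1 - t : ℝ) : ℂ) := by push_cast; ring
  set X := (t : ℂ) • A with hXdef
  set Y := ((1 : ℂ) - (t : ℂ)) • B with hYdef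
  have hX : X.PosSemidef := psd_smul hA ht0
  have hY : Y.PosSemidef := by
    rw [hYdef, hcast]; exact psd_smul hB (by linarith)
  have hpow : ∀ s : ℝ, 0 ≤ s → (s ^ n) ^ ((1:ℝ)/n) = s := by
    intro s hs
    rw [← Real.rpow_natCast s n, ← Real.rpow_mul hs, mul_one_div, div_self hn',
      Real.rpow_one]
  have hre : ∀ (C : Matrix (Fin n) (Fin n) ℂ) (hC : C.PosSemidef) (s : ℝ), 0 ≤ s →
      (((s:ℂ) • C).det.re) = s ^ n * C.det.re := by
    intro C hC s hs
    have : ((s:ℂ) • C).det = (((s ^ n * C.det.re : ℝ)) : ℂ) := by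
      rw [det_smul, Fintype.card_fin]
      conv_lhs => rw [(psd_det_re hC).1]
      push_cast; ring
    rw [this, Complex.ofReal_re]
  have hXr : X.det.re ^ ((1:ℝ)/n) = t * A.det.re ^ ((1:ℝ)/n) := by
    rw [hXdef, hre A hA t ht0, Real.mul_rpow (pow_nonneg ht0 n) (psd_det_re hA).2,
      hpow t ht0]
  have hYr : Y.det.re ^ ((1:ℝ)/n) = (1 - t) * B.det.re ^ ((1:ℝ)/n) := by
    rw [hYdef, hcast, hre B hB (1-t) (by linarith),
      Real.mul_rpow (pow_nonneg (by linarith) n) (psd_det_re hB).2,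
      hpow (1-t) (by linarith)]
  rw [← hXr, ← hYr]
  exact minkowski_det hn hX hY
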